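/- If two sequences of compact convex subsets Aᵢ, Bᵢ of ℂ both converge in the Hausdorff metric to the same compact convex set C with nonempty interior, then for all sufficiently large i, Aᵢ ∩ Bᵢ ≠ ∅. -/
import Mathlib

/-- A closed convex set that is `ε`-dense in a closed ball of radius `r > 2ε`
contains the center of the ball. -/
lemma convex_center_mem_of_dense (S : Set ℂ) (hSconv : Convex ℝ S) (hScl : IsClosed S)
    (z : ℂ) (r ε : ℝ) (hε : 0 ≤ ε) (hr : 2 * ε < r)
    (hdense : ∀ p ∈ Metric.closedBall z r, ∃ s ∈ S, dist s p ≤ ε) : z ∈ S := by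
  by_contra hz
  obtain ⟨f, u, hfu, hfz⟩ := geometric_hahn_banach_closed_point hSconv hScl hz
  have hr0 : 0 ≤ r := by linarith
  obtain ⟨s0, hs0S, -⟩ := hdense z (by simp [hr0])
  have hf0 : f ≠ 0 := by
    intro h
    have h1 := hfu s0 hs0S
    rw [h] at h1 hfz
    simp at h1 hfz
    linarith
  have hnorm : 0 < ‖f‖ := norm_pos_iff.mpr hf0
  -- find w with ‖w‖ ≤ 1 and ‖f‖/2 < ‖f w‖
  have hw : ∃ w : ℂ, ‖w‖ ≤ 1 ∧ ‖f‖ / 2 < ‖f w‖ := by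
    by_contra h
    push_neg at h
    have : ‖f‖ ≤ ‖f‖ / 2 := by
      refine ContinuousLinearMap.opNorm_le_bound f (by positivity) ?_
      intro x
      rcases eq_or_ne x 0 with rfl | hx0
      · simp
      · have hx : ‖(‖x‖⁻¹ • x : ℂ)‖ ≤ 1 := by
          rw [norm_smul, norm_inv, norm_norm]
          exact le_of_eq (inv_mul_cancel₀ (norm_ne_zero_iff.mpr hx0))
        have := h _ hx
        rw [map_smul, norm_smul, norm_inv, norm_norm] at this
        have hxpos : 0 < ‖x‖ := norm_pos_iff.mpr hx0
        calc ‖f x‖ = ‖x‖ * (‖x‖⁻¹ * ‖f x‖) := by rw [← mul_assoc, mul_inv_cancel₀ (ne_of_gt hxpos), one_mul]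
        _ ≤ ‖x‖ * (‖f‖ / 2) := by
            apply mul_le_mul_of_nonneg_left this hxpos.le
        _ = ‖f‖ / 2 * ‖x‖ := by ring
    linarith
  obtain ⟨w, hw1, hw2⟩ := hw
  -- WLOG f w > ‖f‖/2
  have hw' : ∃ w : ℂ, ‖w‖ ≤ 1 ∧ ‖f‖ / 2 < f w := by
    rcases le_or_gt 0 (f w) with h | h
    · exact ⟨w, hw1, by rwa [Real.norm_eq_abs, abs_of_nonneg h] at hw2⟩
    · refine ⟨-w, by simpa using hw1, ?_⟩
      rw [map_neg]
      rwa [Real.norm_eq_abs, abs_of_neg h] at hw2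
  obtain ⟨v, hv1, hv2⟩ := hw'
  set p : ℂ := z + r • v with hp
  have hpball : p ∈ Metric.closedBall z r := by
    simp only [Metric.mem_closedBall, hp, dist_self_add_left, norm_smul, Real.norm_eq_abs,
      abs_of_nonneg hr0]
    calc r * ‖v‖ ≤ r * 1 := by nlinarith
    _ = r := mul_one r
  obtain ⟨s, hsS, hsp⟩ := hdense p hpball
  have h1 : f s < u := hfu s hsS
  have h2 : u < f z := hfz
  have hfp : f p = f z + r * f v := by rw [hp, map_add, map_smul, smul_eq_mul]
  have h3 : f p - f s ≤ ‖f‖ * ε := by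
    calc f p - f s ≤ ‖f (p - s)‖ := by rw [map_sub]; exact le_abs_self _
    _ ≤ ‖f‖ * ‖p - s‖ := f.le_opNorm _
    _ ≤ ‖f‖ * ε := by
        apply mul_le_mul_of_nonneg_left _ (norm_nonneg f)
        rw [← dist_eq_norm, dist_comm]; exact hsp
  have h4 : r * f v > r * (‖f‖ / 2) := by
    apply mul_lt_mul_of_pos_left hv2 (by linarith)
  nlinarith [norm_nonneg f]

theorem convex_hausdorff_limits_eventually_intersect
    (A B : ℕ → Set ℂ) (C : Set ℂ)
    (hAcomp : ∀ i, IsCompact (A i)) (hAconv : ∀ i, Convex ℝ (A i)) (hAne : ∀ i, (A i).Nonempty)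
    (hBcomp : ∀ i, IsCompact (B i)) (hBconv : ∀ i, Convex ℝ (B i)) (hBne : ∀ i, (B i).Nonempty)
    (hCcomp : IsCompact C) (hCconv : Convex ℝ C) (hCint : (interior C).Nonempty)
    (hA : Filter.Tendsto (fun i => Metric.hausdorffDist (A i) C) Filter.atTop (nhds 0))
    (hB : Filter.Tendsto (fun i => Metric.hausdorffDist (B i) C) Filter.atTop (nhds 0)) :
    ∃ N : ℕ, ∀ i ≥ N, (A i ∩ B i).Nonempty := by
  obtain ⟨z, hz⟩ := hCint
  obtain ⟨δ, hδ0, hδ⟩ := Metric.isOpen_iff.mp isOpen_interior z hz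
  set ε : ℝ := δ / 5 with hεdef
  have hε0 : 0 < ε := by positivity
  have hCne : C.Nonempty := ⟨z, interior_subset hz⟩
  -- key: any compact convex S with hausdorffDist S C < ε contains z
  have key : ∀ S : Set ℂ, IsCompact S → Convex ℝ S → S.Nonempty →
      Metric.hausdorffDist S C < ε → z ∈ S := by
    intro S hScomp hSconv hSne hd
    refine convex_center_mem_of_dense S hSconv hScomp.isClosed z (δ / 2) ε hε0.le
      (by rw [hεdef]; linarith) ?_
    intro p hpb
    have hpC : p ∈ C := by
      apply interior_subset
      apply hδ
      simp only [Metric.mem_ball]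
      have := Metric.mem_closedBall.mp hpb
      linarith
    have hne : EMetric.hausdorffEdist C S ≠ ⊤ :=
      Metric.hausdorffEdist_ne_top_of_nonempty_of_bounded hCne hSne
        hCcomp.isBounded hScomp.isBounded
    have hd' : Metric.hausdorffDist C S < ε := by
      rwa [Metric.hausdorffDist_comm]
    obtain ⟨s, hsS, hps⟩ := Metric.exists_dist_lt_of_hausdorffDist_lt hpC hd' hne
    exact ⟨s, hsS, by rw [dist_comm]; exact hps.le⟩
  have hAev := (hA.eventually (gt_mem_nhds hε0)).exists_forall_of_atTop
  have hBev := (hB.eventually (gt_mem_nhds hε0)).exists_forall_of_atTop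
  obtain ⟨N1, hN1⟩ := hAev
  obtain ⟨N2, hN2⟩ := hBev
  refine ⟨max N1 N2, fun i hi => ?_⟩
  have hzA : z ∈ A i := key (A i) (hAcomp i) (hAconv i) (hAne i)
    (hN1 i (le_trans (le_max_left _ _) hi))
  have hzB : z ∈ B i := key (B i) (hBcomp i) (hBconv i) (hBne i)
    (hN2 i (le_trans (le_max_right _ _) hi))
  exact ⟨z, hzA, hzB⟩
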